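/- Let Ω ⊂ ℝ be a bounded open set and let d(x) denote the Euclidean distance from x ∈ Ω to the complement of Ω. Let K_1, …, K_N be a finite partition of Ω into Lebesgue-measurable sets and let ρ_1, …, ρ_N > 0 be constants defining ρ : Ω → ℝ by ρ = ρ_i on K_i, with ∫_Ω ρ dx = 1; write |K_i| for the Lebesgue measure of K_i and d_{K_i} = sup_{x ∈ K_i} d(x). Let C₀ > 0 and let G : Ω × Ω → ℝ be measurable with 0 ≤ G(x,ξ) ≤ C₀ √(d(x) d(ξ)) for all x, ξ ∈ Ω. Suppose λ > 0 and u : Ω → ℝ is measurable, u > 0 almost everywhere, 0 < ∫_Ω ρ u² dx < ∞, and u(x) = λ ∫_Ω G(x,ξ) ρ(ξ) u(ξ) dξ for almost every x ∈ Ω. Then λ ≥ C₀^{−1} · ( Σ_{i=1}^N ρ_i |K_i| d_{K_i} )^{−1}. -/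

import Mathlib

open MeasureTheory

/-- One-dimensional lower bound for the smallest eigenvalue of the
density-weighted eigenvalue problem `-u'' = λ ρ u` with homogeneous Dirichlet
boundary conditions, via the Green's-function bound
`G(x,ξ) ≤ C₀ √(d(x) d(ξ))`. -/
theorem eigenvalue_lower_bound_one_dim
    (Ω : Set ℝ) (hΩo : IsOpen Ω) (hΩb : Bornology.IsBounded Ω)
    (N : ℕ) (K : Fin N → Set ℝ) (hKmeas : ∀ i, MeasurableSet (K i))
    (hKdisj : Pairwise (Function.onFun Disjoint K)) (hKcover : (⋃ i, K i) = Ω)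
    (ρv : Fin N → ℝ) (hρv : ∀ i, 0 < ρv i)
    (ρ : ℝ → ℝ) (hρ : ∀ i, ∀ x ∈ K i, ρ x = ρv i)
    (hρint : (∫ x in Ω, ρ x) = 1)
    (C₀ : ℝ) (hC₀ : 0 < C₀)
    (G : ℝ → ℝ → ℝ) (hGmeas : Measurable (Function.uncurry G))
    (hG : ∀ x ∈ Ω, ∀ ξ ∈ Ω, 0 ≤ G x ξ ∧
      G x ξ ≤ C₀ * Real.sqrt (Metric.infDist x Ωᶜ * Metric.infDist ξ Ωᶜ))
    (lam : ℝ) (hlam : 0 < lam)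
    (u : ℝ → ℝ) (humeas : Measurable u)
    (hupos : ∀ᵐ x ∂(volume.restrict Ω), 0 < u x)
    (hintpos : 0 < ∫⁻ x in Ω, ENNReal.ofReal (ρ x * u x ^ 2))
    (hintfin : (∫⁻ x in Ω, ENNReal.ofReal (ρ x * u x ^ 2)) < ⊤)
    (hrep : ∀ᵐ x ∂(volume.restrict Ω),
      u x = lam * ∫ ξ in Ω, G x ξ * ρ ξ * u ξ) :
    C₀⁻¹ * (∑ i, ρv i * (volume (K i)).toReal *
        (⨆ x : K i, Metric.infDist (x : ℝ) Ωᶜ))⁻¹ ≤ lam := by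
  have hΩm : MeasurableSet Ω := hΩo.measurableSet
  have hΩfin : volume Ω < ⊤ := hΩb.measure_lt_top
  -- a point outside Ω
  obtain ⟨r, hr⟩ := hΩb.subset_closedBall 0
  have hyΩ : (|r| + 1) ∉ Ω := by
    intro h
    have h2 := hr h
    rw [Metric.mem_closedBall, Real.dist_eq, sub_zero,
      abs_of_nonneg (by positivity)] at h2
    linarith [le_abs_self r]
  have hΩc_ne : Ωᶜ.Nonempty := ⟨|r| + 1, hyΩ⟩
  have hdnn : ∀ x : ℝ, 0 ≤ Metric.infDist x Ωᶜ := fun x => Metric.infDist_nonneg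
  have hdpos : ∀ x ∈ Ω, 0 < Metric.infDist x Ωᶜ := fun x hx =>
    (hΩo.isClosed_compl.notMem_iff_infDist_pos hΩc_ne).1 (by simpa using hx)
  have hdmeas : Measurable (fun x : ℝ => Metric.infDist x Ωᶜ) :=
    (Metric.continuous_infDist_pt _).measurable
  have hdbd : ∀ x ∈ Ω, Metric.infDist x Ωᶜ ≤ 2 * |r| + 2 := by
    intro x hx
    have h1 : Metric.infDist x Ωᶜ ≤ dist x (|r| + 1) :=
      Metric.infDist_le_dist_of_mem hyΩ
    have h2 : |x| ≤ r := by
      have h3 := hr hx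
      rwa [Metric.mem_closedBall, Real.dist_eq, sub_zero] at h3
    rw [Real.dist_eq] at h1
    calc Metric.infDist x Ωᶜ ≤ |x - (|r| + 1)| := h1
      _ ≤ |x| + |(|r| + 1)| := abs_sub _ _
      _ ≤ r + (|r| + 1) := by
          rw [abs_of_nonneg (by positivity : (0:ℝ) ≤ |r| + 1)]; linarith
      _ ≤ 2 * |r| + 2 := by linarith [le_abs_self r]
  -- membership in the partition
  have hmem : ∀ x ∈ Ω, ∃ i, x ∈ K i := by
    intro x hx
    rw [← hKcover] at hx
    exact Set.mem_iUnion.1 hx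
  have hKsub : ∀ i, K i ⊆ Ω := fun i => hKcover ▸ Set.subset_iUnion K i
  have hρpos : ∀ x ∈ Ω, 0 < ρ x := by
    intro x hx
    obtain ⟨i, hi⟩ := hmem x hx
    rw [hρ i x hi]; exact hρv i
  have hρbd : ∀ x ∈ Ω, ρ x ≤ ∑ i, ρv i := by
    intro x hx
    obtain ⟨i, hi⟩ := hmem x hx
    rw [hρ i x hi]
    exact Finset.single_le_sum (fun j _ => (hρv j).le) (Finset.mem_univ i)
  -- measurable version of ρ
  set ρ' : ℝ → ℝ := fun x => ∑ i, (K i).indicator (fun _ => ρv i) x with hρ'_def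
  have hρ'meas : Measurable ρ' := by
    apply Finset.measurable_sum
    intro i _
    exact measurable_const.indicator (hKmeas i)
  have hρ'eq : ∀ x ∈ Ω, ρ x = ρ' x := by
    intro x hx
    obtain ⟨i, hi⟩ := hmem x hx
    have h1 : ∑ j : Fin N, (K j).indicator (fun _ => ρv j) x = ρv i := by
      rw [Finset.sum_eq_single_of_mem i (Finset.mem_univ i)]
      · exact Set.indicator_of_mem hi _
      · intro j _ hji
        exact Set.indicator_of_notMem
          (fun hj => Set.disjoint_left.mp (hKdisj hji) hj hi) _
    rw [hρ i x hi]
    exact h1.symm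
  have hρae : (fun x => ρ x) =ᵐ[volume.restrict Ω] ρ' := by
    filter_upwards [ae_restrict_mem hΩm] with x hx using hρ'eq x hx
  have haemem := ae_restrict_mem (μ := volume) hΩm
  -- positivity of the measure of Ω
  have hΩpos : 0 < volume Ω := by
    by_contra h
    push_neg at h
    have h0 : volume Ω = 0 := le_antisymm h (zero_le)
    have hr0 : volume.restrict Ω = 0 := by
      rw [Measure.restrict_eq_zero]; exact h0
    rw [hr0] at hintpos
    simp at hintpos
  -- integrability of ρ * u^2
  have hu2meas : AEStronglyMeasurable (fun x => ρ x * u x ^ 2)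
      (volume.restrict Ω) := by
    refine ((hρ'meas.mul (humeas.pow_const 2)).aestronglyMeasurable).congr ?_
    filter_upwards [hρae] with x hx
    simp [hx]
  have hu2nn : 0 ≤ᵐ[volume.restrict Ω] fun x => ρ x * u x ^ 2 := by
    filter_upwards [haemem] with x hx
    exact mul_nonneg (hρpos x hx).le (sq_nonneg _)
  have hu2int : IntegrableOn (fun x => ρ x * u x ^ 2) Ω volume := by
    refine ⟨hu2meas, ?_⟩
    rw [hasFiniteIntegral_iff_ofReal hu2nn]
    exact hintfin
  -- integrability of ρ * d
  have hρdint : IntegrableOn (fun x => ρ x * Metric.infDist x Ωᶜ) Ω volume := by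
    refine ⟨((hρ'meas.mul hdmeas).aestronglyMeasurable).congr (by
        filter_upwards [hρae] with x hx; simp [hx]),
      HasFiniteIntegral.restrict_of_bounded
        (C := (∑ i, ρv i) * (2 * |r| + 2)) hΩfin ?_⟩
    · filter_upwards [haemem] with x hx
      rw [Real.norm_eq_abs, abs_of_nonneg (mul_nonneg (hρpos x hx).le (hdnn x))]
      exact mul_le_mul (hρbd x hx) (hdbd x hx) (hdnn x)
        (Finset.sum_nonneg fun j _ => (hρv j).le)
  -- integrability of ρ * sqrt d * u
  have hgint : IntegrableOn
      (fun ξ => ρ ξ * Real.sqrt (Metric.infDist ξ Ωᶜ) * u ξ) Ω volume := by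
    have hbound : ∀ rr dd uu : ℝ, 0 ≤ rr → 0 ≤ dd → 0 ≤ uu →
        rr * Real.sqrt dd * uu ≤ (rr * dd + rr * uu ^ 2) / 2 := by
      intro rr dd uu hrr hdd huu
      have h1 : Real.sqrt rr * Real.sqrt rr = rr := Real.mul_self_sqrt hrr
      have h2 : Real.sqrt dd * Real.sqrt dd = dd := Real.mul_self_sqrt hdd
      have key : rr * Real.sqrt dd * uu =
          (Real.sqrt rr * Real.sqrt dd) * (Real.sqrt rr * uu) := by
        calc rr * Real.sqrt dd * uu
            = (Real.sqrt rr * Real.sqrt rr) * Real.sqrt dd * uu := by rw [h1]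
          _ = (Real.sqrt rr * Real.sqrt dd) * (Real.sqrt rr * uu) := by ring
      have h3 : (Real.sqrt rr * Real.sqrt dd) * (Real.sqrt rr * uu) ≤
          ((Real.sqrt rr * Real.sqrt dd) ^ 2 + (Real.sqrt rr * uu) ^ 2) / 2 := by
        nlinarith [sq_nonneg (Real.sqrt rr * Real.sqrt dd - Real.sqrt rr * uu)]
      have h4 : (Real.sqrt rr * Real.sqrt dd) ^ 2 = rr * dd := by
        rw [mul_pow, sq, sq, h1, h2]
      have h5 : (Real.sqrt rr * uu) ^ 2 = rr * uu ^ 2 := by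
        rw [mul_pow, sq, h1]
      rw [key]
      rw [h4, h5] at h3
      exact h3
    have hmaj : IntegrableOn
        (fun x => (ρ x * Metric.infDist x Ωᶜ + ρ x * u x ^ 2) / 2) Ω volume :=
      (hρdint.add hu2int).div_const 2
    refine Integrable.mono hmaj ?_ ?_
    · exact (((hρ'meas.mul hdmeas.sqrt).mul humeas).aestronglyMeasurable).congr
        (by filter_upwards [hρae] with x hx; simp [hx])
    · filter_upwards [haemem, hupos] with x hx hux
      have hnn : 0 ≤ ρ x * Real.sqrt (Metric.infDist x Ωᶜ) * u x :=
        mul_nonneg (mul_nonneg (hρpos x hx).le (Real.sqrt_nonneg _)) hux.le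
      rw [Real.norm_eq_abs, Real.norm_eq_abs, abs_of_nonneg hnn]
      have hle := hbound (ρ x) (Metric.infDist x Ωᶜ) (u x)
        (hρpos x hx).le (hdnn x) hux.le
      exact hle.trans (le_abs_self _)
  set I : ℝ := ∫ ξ in Ω, ρ ξ * Real.sqrt (Metric.infDist ξ Ωᶜ) * u ξ with hI_def
  have hInn : 0 ≤ᵐ[volume.restrict Ω]
      fun ξ => ρ ξ * Real.sqrt (Metric.infDist ξ Ωᶜ) * u ξ := by
    filter_upwards [haemem, hupos] with x hx hux
    exact mul_nonneg (mul_nonneg (hρpos x hx).le (Real.sqrt_nonneg _)) hux.le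
  -- I > 0
  have hIpos : 0 < I := by
    rw [hI_def, setIntegral_pos_iff_support_of_nonneg_ae hInn hgint]
    set f : ℝ → ℝ := fun ξ => ρ ξ * Real.sqrt (Metric.infDist ξ Ωᶜ) * u ξ
    have hsupp : ∀ᵐ x ∂(volume.restrict Ω), x ∈ Function.support f := by
      filter_upwards [haemem, hupos] with x hx hux
      exact ne_of_gt (mul_pos (mul_pos (hρpos x hx)
        (Real.sqrt_pos.2 (hdpos x hx))) hux)
    have h0 : volume.restrict Ω (Function.support f)ᶜ = 0 := by
      have := ae_iff.mp hsupp
      simpa [Set.compl_def] using this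
    have h2 : volume Ω ≤ volume.restrict Ω (Function.support f) := by
      have h3 := measure_union_le (μ := volume.restrict Ω)
        (Function.support f) (Function.support f)ᶜ
      rw [Set.union_compl_self, h0, add_zero] at h3
      simpa [Measure.restrict_apply_univ] using h3
    rw [Measure.restrict_apply' hΩm] at h2
    exact lt_of_lt_of_le hΩpos h2
  -- pointwise a.e. bound on u
  have hub : ∀ᵐ x ∂(volume.restrict Ω),
      u x ≤ lam * C₀ * Real.sqrt (Metric.infDist x Ωᶜ) * I := by
    filter_upwards [haemem, hrep] with x hx hxr
    have hmono : (∫ ξ in Ω, G x ξ * ρ ξ * u ξ) ≤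
        ∫ ξ in Ω, C₀ * Real.sqrt (Metric.infDist x Ωᶜ) *
          (ρ ξ * Real.sqrt (Metric.infDist ξ Ωᶜ) * u ξ) := by
      apply integral_mono_of_nonneg
      · filter_upwards [haemem, hupos] with ξ hξ huξ
        exact mul_nonneg (mul_nonneg (hG x hx ξ hξ).1 (hρpos ξ hξ).le) huξ.le
      · exact hgint.const_mul _
      · filter_upwards [haemem, hupos] with ξ hξ huξ
        have h1 := (hG x hx ξ hξ).2
        rw [Real.sqrt_mul (hdnn x)] at h1
        have h2 : 0 ≤ ρ ξ * u ξ := mul_nonneg (hρpos ξ hξ).le huξ.le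
        calc G x ξ * ρ ξ * u ξ = G x ξ * (ρ ξ * u ξ) := by ring
          _ ≤ (C₀ * (Real.sqrt (Metric.infDist x Ωᶜ) *
                Real.sqrt (Metric.infDist ξ Ωᶜ))) * (ρ ξ * u ξ) :=
              mul_le_mul_of_nonneg_right h1 h2
          _ = C₀ * Real.sqrt (Metric.infDist x Ωᶜ) *
                (ρ ξ * Real.sqrt (Metric.infDist ξ Ωᶜ) * u ξ) := by ring
    have heq : (∫ ξ in Ω, C₀ * Real.sqrt (Metric.infDist x Ωᶜ) *
        (ρ ξ * Real.sqrt (Metric.infDist ξ Ωᶜ) * u ξ))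
        = C₀ * Real.sqrt (Metric.infDist x Ωᶜ) * I := by
      rw [hI_def, integral_const_mul]
    rw [hxr]
    calc lam * ∫ ξ in Ω, G x ξ * ρ ξ * u ξ
        ≤ lam * (C₀ * Real.sqrt (Metric.infDist x Ωᶜ) * I) := by
          apply mul_le_mul_of_nonneg_left _ hlam.le
          rw [← heq]; exact hmono
      _ = lam * C₀ * Real.sqrt (Metric.infDist x Ωᶜ) * I := by ring
  set J : ℝ := ∫ x in Ω, ρ x * Metric.infDist x Ωᶜ with hJ_def
  have hID : I ≤ lam * C₀ * I * J := by
    have hmono : I ≤ ∫ x in Ω, lam * C₀ * I * (ρ x * Metric.infDist x Ωᶜ) := by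
      rw [hI_def]
      apply integral_mono_of_nonneg hInn (hρdint.const_mul _)
      filter_upwards [haemem, hupos, hub] with x hx hux hu2
      have hsq : Real.sqrt (Metric.infDist x Ωᶜ) *
          Real.sqrt (Metric.infDist x Ωᶜ) = Metric.infDist x Ωᶜ :=
        Real.mul_self_sqrt (hdnn x)
      calc ρ x * Real.sqrt (Metric.infDist x Ωᶜ) * u x
          ≤ ρ x * Real.sqrt (Metric.infDist x Ωᶜ) *
            (lam * C₀ * Real.sqrt (Metric.infDist x Ωᶜ) * I) :=
            mul_le_mul_of_nonneg_left hu2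
              (mul_nonneg (hρpos x hx).le (Real.sqrt_nonneg _))
        _ = lam * C₀ * I * (ρ x * (Real.sqrt (Metric.infDist x Ωᶜ) *
              Real.sqrt (Metric.infDist x Ωᶜ))) := by ring
        _ = lam * C₀ * I * (ρ x * Metric.infDist x Ωᶜ) := by rw [hsq]
    calc I ≤ ∫ x in Ω, lam * C₀ * I * (ρ x * Metric.infDist x Ωᶜ) := hmono
      _ = lam * C₀ * I * J := by rw [hJ_def, integral_const_mul]
  have h1 : 1 ≤ lam * C₀ * J := by
    have hmul : I * 1 ≤ I * (lam * C₀ * J) := by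
      calc I * 1 = I := mul_one I
        _ ≤ lam * C₀ * I * J := hID
        _ = I * (lam * C₀ * J) := by ring
    exact le_of_mul_le_mul_left hmul hIpos
  -- bound J by the sum
  set S : ℝ := ∑ i, ρv i * (volume (K i)).toReal *
      (⨆ x : K i, Metric.infDist (x : ℝ) Ωᶜ) with hS_def
  have hJsum : J = ∑ i, ∫ x in K i, ρ x * Metric.infDist x Ωᶜ := by
    have h2 := integral_iUnion (μ := volume)
      (f := fun x => ρ x * Metric.infDist x Ωᶜ) hKmeas hKdisj
      (by rw [hKcover]; exact hρdint)
    rw [hKcover] at h2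
    rw [hJ_def, h2, tsum_fintype]
  have hterm : ∀ i, (∫ x in K i, ρ x * Metric.infDist x Ωᶜ) ≤
      ρv i * (volume (K i)).toReal *
        (⨆ x : K i, Metric.infDist (x : ℝ) Ωᶜ) := by
    intro i
    have hKfin : volume (K i) < ⊤ :=
      lt_of_le_of_lt (measure_mono (hKsub i)) hΩfin
    have hbdd : BddAbove (Set.range fun x : K i => Metric.infDist (x : ℝ) Ωᶜ) := by
      refine ⟨2 * |r| + 2, ?_⟩
      rintro _ ⟨⟨y, hy⟩, rfl⟩
      exact hdbd y (hKsub i hy)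
    have hle : ∀ x ∈ K i, ρ x * Metric.infDist x Ωᶜ ≤
        ρv i * (⨆ x : K i, Metric.infDist (x : ℝ) Ωᶜ) := by
      intro x hx
      rw [hρ i x hx]
      exact mul_le_mul_of_nonneg_left
        (le_ciSup hbdd (⟨x, hx⟩ : K i)) (hρv i).le
    calc (∫ x in K i, ρ x * Metric.infDist x Ωᶜ)
        ≤ ∫ _x in K i, ρv i * (⨆ x : K i, Metric.infDist (x : ℝ) Ωᶜ) :=
          setIntegral_mono_on (hρdint.mono_set (hKsub i))
            (integrableOn_const hKfin.ne) (hKmeas i) hle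
      _ = (volume (K i)).toReal *
            (ρv i * (⨆ x : K i, Metric.infDist (x : ℝ) Ωᶜ)) := by
          rw [setIntegral_const, smul_eq_mul]; rfl
      _ = ρv i * (volume (K i)).toReal *
            (⨆ x : K i, Metric.infDist (x : ℝ) Ωᶜ) := by ring
  have hJS : J ≤ S := by
    rw [hJsum, hS_def]
    exact Finset.sum_le_sum fun i _ => hterm i
  have hJpos : 0 < J := by nlinarith [mul_pos hlam hC₀]
  have hSpos : 0 < S := lt_of_lt_of_le hJpos hJS
  have h2 : 1 ≤ lam * (C₀ * S) := by nlinarith [mul_pos hlam hC₀]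
  have hCS : 0 < C₀ * S := mul_pos hC₀ hSpos
  calc C₀⁻¹ * S⁻¹ = 1 / (C₀ * S) := by rw [one_div, mul_inv]
    _ ≤ lam := (div_le_iff₀ hCS).mpr (by linarith)
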